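/- Let w ≥ 1 and i ≥ 0 be integers, and define a sequence of functions φ_0, φ_1, ..., φ_i : ℝ → ℝ by φ_0(s) = e^s and, for j ≥ 1, φ_j(s) = (w·e^s)/(w+j) + (e^s/(w+j))·∑_{l=0}^{j-1} φ_l(s). Then for all i ≥ 1 and all s, φ_i(s) = e^s · ∏_{j=1}^{i} (w + j - 1 + e^s)/(w + j). -/

import Mathlib

open Finset Real

theorem anchorhash_mgf_closed_form
    (w : ℕ) (hw : 1 ≤ w) (φ : ℕ → ℝ → ℝ)
    (h0 : ∀ s, φ 0 s = Real.exp s)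
    (hrec : ∀ j, 1 ≤ j → ∀ s,
      φ j s = (w * Real.exp s) / ((w : ℝ) + j)
        + (Real.exp s / ((w : ℝ) + j)) * ∑ l ∈ Finset.range j, φ l s) :
    ∀ i, 1 ≤ i → ∀ s,
      φ i s = Real.exp s *
        ∏ j ∈ Finset.Icc 1 i, ((w : ℝ) + j - 1 + Real.exp s) / ((w : ℝ) + j) := by
  have hwpos : (0:ℝ) < w := by exact_mod_cast hw
  intro i hi
  induction i, hi using Nat.le_induction with
  | base =>
    intro s
    have h := hrec 1 le_rfl s
    simp only [Finset.range_one, Finset.sum_singleton, h0] at h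
    rw [h]
    simp only [Finset.Icc_self, Finset.prod_singleton]
    have hne : (w:ℝ) + 1 ≠ 0 := by positivity
    push_cast
    field_simp
    ring
  | succ i hi ih =>
    intro s
    have hne : (w:ℝ) + (i:ℝ) + 1 ≠ 0 := by positivity
    have hne' : (w:ℝ) + (i:ℝ) ≠ 0 := by positivity
    have h1 := hrec i hi s
    have h2 := hrec (i+1) (by omega) s
    rw [Finset.sum_range_succ] at h2
    have hstep : φ (i+1) s = φ i s * (((w:ℝ) + i + Real.exp s) / ((w:ℝ) + i + 1)) := by
      have e1 : φ i s * ((w:ℝ) + i) = w * Real.exp s + Real.exp s * ∑ l ∈ Finset.range i, φ l s := by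
        rw [h1]; field_simp
      have e2 : φ (i+1) s * ((w:ℝ) + i + 1) = w * Real.exp s + Real.exp s * (∑ l ∈ Finset.range i, φ l s) + Real.exp s * φ i s := by
        rw [h2]; push_cast; field_simp; ring
      have : φ (i+1) s * ((w:ℝ) + i + 1) = φ i s * ((w:ℝ) + i + Real.exp s) := by
        rw [e2, ← e1]; ring
      field_simp
      exact this
    rw [hstep, ih s, Finset.prod_Icc_succ_top (by omega : 1 ≤ i + 1)]
    push_cast
    ring
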